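/- Let g be a symmetric (0,2)-tensor field on (0,∞)×(0,2π)×(0,π) (spherical coordinates) satisfying the Killing equations ∂_ξ g = 0 for all three rotation generators ξ = ∂/∂φ, ζ = −sin φ ∂/∂ϑ − cot ϑ cos φ ∂/∂φ, λ = cos φ ∂/∂ϑ − cot ϑ sin φ ∂/∂φ. Then there exist functions P, Q of r alone such that g = P(r) dr⊗dr + Q(r)(dϑ⊗dϑ + sin²ϑ dφ⊗dφ); in particular g_{rφ} = g_{rϑ} = g_{φϑ} = 0, g_{rr} = P(r), g_{ϑϑ} = Q(r), and g_{φφ} = Q(r) sin²ϑ. -/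

import Mathlib

open scoped BigOperators

/-- Partial derivative of a real function on `ℝ³` in the `j`-th coordinate direction. -/
noncomputable def pd (f : (Fin 3 → ℝ) → ℝ) (j : Fin 3) (x : Fin 3 → ℝ) : ℝ :=
  fderiv ℝ f x (Pi.single j 1)

/-- The open box `(0,∞) × (0,2π) × (0,π)` in `(r, φ, ϑ)`-space. -/
def sphDom : Set (Fin 3 → ℝ) :=
  {p | 0 < p 0 ∧ p 1 ∈ Set.Ioo 0 (2 * Real.pi) ∧ p 2 ∈ Set.Ioo 0 Real.pi}

/-- The Killing equation for a vector field `ξ` and a `(0,2)`-tensor `G` on `sphDom`. -/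
def KillingEq (G : (Fin 3 → ℝ) → Matrix (Fin 3) (Fin 3) ℝ)
    (ξ : (Fin 3 → ℝ) → (Fin 3 → ℝ)) : Prop :=
  ∀ p ∈ sphDom, ∀ k l : Fin 3,
    (∑ m, pd (fun q => G q k l) m p * ξ p m)
      + (∑ i, G p i l * pd (fun q => ξ q i) k p)
      + (∑ j, G p k j * pd (fun q => ξ q j) l p) = 0

lemma pd_const (c : ℝ) (k : Fin 3) (p : Fin 3 → ℝ) : pd (fun _ => c) k p = 0 := by
  simp [pd]

lemma hasFDerivAt_coord (f : ℝ → ℝ) {c : ℝ} (j : Fin 3) (p : Fin 3 → ℝ)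
    (hf : HasDerivAt f c (p j)) :
    HasFDerivAt (fun q : Fin 3 → ℝ => f (q j))
      ((ContinuousLinearMap.smulRight (1 : ℝ →L[ℝ] ℝ) c).comp
        (ContinuousLinearMap.proj j)) p :=
  (hasDerivAt_iff_hasFDerivAt.mp hf).comp p (hasFDerivAt_apply j p)

lemma pd_coord (f : ℝ → ℝ) {c : ℝ} (j k : Fin 3) (p : Fin 3 → ℝ)
    (hf : HasDerivAt f c (p j)) :
    pd (fun q => f (q j)) k p = (Pi.single k 1 : Fin 3 → ℝ) j * c := by
  rw [pd, (hasFDerivAt_coord f j p hf).fderiv]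
  simp [ContinuousLinearMap.smulRight_apply, smul_eq_mul]

lemma pd_coord_mul (f g : ℝ → ℝ) {c d : ℝ} (j j' k : Fin 3) (p : Fin 3 → ℝ)
    (hf : HasDerivAt f c (p j)) (hg : HasDerivAt g d (p j')) :
    pd (fun q => f (q j) * g (q j')) k p
      = (Pi.single k 1 : Fin 3 → ℝ) j * c * g (p j')
        + f (p j) * ((Pi.single k 1 : Fin 3 → ℝ) j' * d) := by
  have hm : HasFDerivAt (fun q => f (q j) * g (q j')) _ p :=
    (hasFDerivAt_coord f j p hf).mul (hasFDerivAt_coord g j' p hg)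
  rw [pd, hm.fderiv]
  simp [ContinuousLinearMap.smulRight_apply, smul_eq_mul]
  ring

lemma hasDerivAt_negcot (x : ℝ) (hx : Real.sin x ≠ 0) :
    HasDerivAt (fun y => -(Real.cos y / Real.sin y)) (1 / Real.sin x ^ 2) x := by
  have h := ((Real.hasDerivAt_cos x).div (Real.hasDerivAt_sin x) hx).neg
  have e : 1 / Real.sin x ^ 2
      = -((-Real.sin x * Real.sin x - Real.cos x * Real.cos x) / Real.sin x ^ 2) := by
    rw [eq_neg_iff_add_eq_zero, ← add_div, div_eq_zero_iff]
    left
    nlinarith [Real.sin_sq_add_cos_sq x]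
  rw [e]
  exact h

lemma const_on_slice (a : (Fin 3 → ℝ) → ℝ)
    (hdiff : ∀ p ∈ sphDom, DifferentiableAt ℝ a p)
    (h1 : ∀ p ∈ sphDom, pd a 1 p = 0) (h2 : ∀ p ∈ sphDom, pd a 2 p = 0)
    (p q : Fin 3 → ℝ) (hp : p ∈ sphDom) (hq : q ∈ sphDom) (h0 : p 0 = q 0) :
    a p = a q := by
  obtain ⟨hp0, hp1, hp2⟩ := hp
  obtain ⟨hq0, hq1, hq2⟩ := hq
  set v : Fin 3 → ℝ := fun i => q i - p i with hv
  set γ : ℝ → (Fin 3 → ℝ) := fun t => p + t • v with hγ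
  have hmem : ∀ t ∈ Set.Icc (0:ℝ) 1, γ t ∈ sphDom := by
    intro t ⟨ht0, ht1⟩
    refine ⟨?_, ?_, ?_⟩ <;>
      simp only [hγ, hv, Pi.add_apply, Pi.smul_apply, smul_eq_mul]
    · nlinarith [hp0, hq0, h0]
    all_goals
      first
      | (have h := (convex_Ioo (0:ℝ) (2*Real.pi)) hp1 hq1
            (by linarith : (0:ℝ) ≤ 1 - t) ht0 (by ring)
         simp only [smul_eq_mul] at h
         constructor <;> linarith [h.1, h.2])
      | (have h := (convex_Ioo (0:ℝ) Real.pi) hp2 hq2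
            (by linarith : (0:ℝ) ≤ 1 - t) ht0 (by ring)
         simp only [smul_eq_mul] at h
         constructor <;> linarith [h.1, h.2])
  have hvdec : v = v 1 • (Pi.single 1 1 : Fin 3 → ℝ) + v 2 • (Pi.single 2 1 : Fin 3 → ℝ) := by
    funext i
    fin_cases i <;>
      simp [hv, Pi.single_apply, h0]
  have hderiv : ∀ t ∈ Set.Icc (0:ℝ) 1, HasDerivAt (fun s => a (γ s)) 0 t := by
    intro t ht
    have hγd : HasDerivAt γ v t := by
      have : HasDerivAt (fun s : ℝ => s • v) ((1:ℝ) • v) t := (hasDerivAt_id t).smul_const v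
      exact (by simpa using this : HasDerivAt (fun s : ℝ => s • v) v t).const_add p
    have hmem' := hmem t ht
    have := ((hdiff _ hmem').hasFDerivAt).comp_hasDerivAt t hγd
    have hz : fderiv ℝ a (γ t) v = 0 := by
      rw [hvdec, map_add, map_smul, map_smul]
      have e1 := h1 _ hmem'
      have e2 := h2 _ hmem'
      simp only [pd] at e1 e2
      simp [e1, e2]
    rwa [hz] at this
  have hcont : ContinuousOn (fun s => a (γ s)) (Set.Icc 0 1) :=
    fun t ht => ((hderiv t ht).continuousAt).continuousWithinAt
  have := constant_of_has_deriv_right_zero hcont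
    (fun t ht => ((hderiv t (Set.mem_Icc_of_Ico ht)).hasDerivWithinAt)) 1 (by norm_num)
  have hγ0 : γ 0 = p := by funext i; simp [hγ]
  have hγ1 : γ 1 = q := by funext i; simp [hγ, hv]
  rw [hγ0, hγ1] at this
  exact this.symm

set_option maxHeartbeats 1000000 in
/-- a symmetric `(0,2)`-tensor field on `(0,∞)×(0,2π)×(0,π)` (spherical
coordinates `(r,φ,ϑ)`) satisfying the Killing equations for all three rotation generators
`ξ = ∂/∂φ`, `ζ = −sin φ ∂/∂ϑ − cot ϑ cos φ ∂/∂φ`, `λ = cos φ ∂/∂ϑ − cot ϑ sin φ ∂/∂φ`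
has the form `g = P(r) dr⊗dr + Q(r)(dϑ⊗dϑ + sin²ϑ dφ⊗dφ)`. -/
theorem rotation_invariant_tensor_form
    (G : (Fin 3 → ℝ) → Matrix (Fin 3) (Fin 3) ℝ)
    (hsymm : ∀ p ∈ sphDom, ∀ k l : Fin 3, G p k l = G p l k)
    (hdiff : ∀ k l, ∀ p ∈ sphDom, DifferentiableAt ℝ (fun q => G q k l) p)
    (hξ : KillingEq G fun _ => ![0, 1, 0])
    (hζ : KillingEq G fun p =>
      ![0, -(Real.cos (p 2) / Real.sin (p 2)) * Real.cos (p 1), -Real.sin (p 1)])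
    (hlam : KillingEq G fun p =>
      ![0, -(Real.cos (p 2) / Real.sin (p 2)) * Real.sin (p 1), Real.cos (p 1)]) :
    ∃ P Q : ℝ → ℝ, ∀ p ∈ sphDom,
      G p 0 0 = P (p 0) ∧
      G p 2 2 = Q (p 0) ∧
      G p 1 1 = Q (p 0) * Real.sin (p 2) ^ 2 ∧
      G p 0 1 = 0 ∧ G p 0 2 = 0 ∧ G p 1 2 = 0 := by
  have hdphi : ∀ p ∈ sphDom, ∀ k l : Fin 3, pd (fun q => G q k l) 1 p = 0 := by
    intro p hp k l
    have h := hξ p hp k l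
    simpa [Fin.sum_univ_three, pd_const] using h
  have key : ∀ p ∈ sphDom,
      G p 0 1 = 0 ∧ G p 0 2 = 0 ∧ G p 1 2 = 0 ∧
      G p 1 1 = G p 2 2 * Real.sin (p 2) ^ 2 ∧
      pd (fun q => G q 0 0) 2 p = 0 ∧ pd (fun q => G q 2 2) 2 p = 0 := by
    intro p hp
    have hs2 : Real.sin (p 2) ≠ 0 :=
      ne_of_gt (Real.sin_pos_of_pos_of_lt_pi hp.2.2.1 hp.2.2.2)
    have hz1 : ∀ k, pd (fun q => -(Real.cos (q 2) / Real.sin (q 2)) * Real.cos (q 1)) k p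
        = (Pi.single k 1 : Fin 3 → ℝ) 2 * (1 / Real.sin (p 2) ^ 2) * Real.cos (p 1)
          + -(Real.cos (p 2) / Real.sin (p 2)) * ((Pi.single k 1 : Fin 3 → ℝ) 1 * -Real.sin (p 1)) :=
      fun k => pd_coord_mul (fun x => -(Real.cos x / Real.sin x)) Real.cos 2 1 k p
        (hasDerivAt_negcot _ hs2) (Real.hasDerivAt_cos _)
    have hz2 : ∀ k, pd (fun q => -Real.sin (q 1)) k p
        = (Pi.single k 1 : Fin 3 → ℝ) 1 * -Real.cos (p 1) :=
      fun k => pd_coord (fun x => -Real.sin x) 1 k p (Real.hasDerivAt_sin _).neg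
    have hl1 : ∀ k, pd (fun q => -(Real.cos (q 2) / Real.sin (q 2)) * Real.sin (q 1)) k p
        = (Pi.single k 1 : Fin 3 → ℝ) 2 * (1 / Real.sin (p 2) ^ 2) * Real.sin (p 1)
          + -(Real.cos (p 2) / Real.sin (p 2)) * ((Pi.single k 1 : Fin 3 → ℝ) 1 * Real.cos (p 1)) :=
      fun k => pd_coord_mul (fun x => -(Real.cos x / Real.sin x)) Real.sin 2 1 k p
        (hasDerivAt_negcot _ hs2) (Real.hasDerivAt_sin _)
    have hl2 : ∀ k, pd (fun q => Real.cos (q 1)) k p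
        = (Pi.single k 1 : Fin 3 → ℝ) 1 * -Real.sin (p 1) :=
      fun k => pd_coord Real.cos 1 k p (Real.hasDerivAt_cos _)
    have h10 : G p 1 0 = G p 0 1 := hsymm p hp 1 0
    have h20 : G p 2 0 = G p 0 2 := hsymm p hp 2 0
    have h21 : G p 2 1 = G p 1 2 := hsymm p hp 2 1
    have Ez00 := hζ p hp 0 0
    have El00 := hlam p hp 0 0
    have Ez01 := hζ p hp 0 1
    have El01 := hlam p hp 0 1
    have Ez02 := hζ p hp 0 2
    have El02 := hlam p hp 0 2
    have Ez11 := hζ p hp 1 1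
    have El11 := hlam p hp 1 1
    have Ez12 := hζ p hp 1 2
    have El12 := hlam p hp 1 2
    have Ez22 := hζ p hp 2 2
    have El22 := hlam p hp 2 2
    simp only [Fin.sum_univ_three, Matrix.cons_val_zero, Matrix.cons_val_one, Matrix.head_cons,
      Matrix.cons_val_two, Matrix.tail_cons, hz1, hz2, hl1, hl2, pd_const, hdphi p hp,
      h10, h20, h21] at Ez00 El00 Ez01 El01 Ez02 El02 Ez11 El11 Ez12 El12 Ez22 El22
    simp only [Pi.single_apply] at Ez00 El00 Ez01 El01 Ez02 El02 Ez11 El11 Ez12 El12 Ez22 El22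
    norm_num at Ez00 El00 Ez01 El01 Ez02 El02 Ez11 El11 Ez12 El12 Ez22 El22
    simp at Ez00 El00 Ez01 El01 Ez02 El02 Ez11 El11 Ez12 El12 Ez22 El22
    have hb2 : G p 0 1 * (Real.sin (p 2) ^ 2)⁻¹ = 0 := by
      linear_combination Real.cos (p 1) * Ez02 + Real.sin (p 1) * El02
        - G p 0 1 * (Real.sin (p 2) ^ 2)⁻¹ * Real.sin_sq_add_cos_sq (p 1)
    have hb : G p 0 1 = 0 :=
      (mul_eq_zero.mp hb2).resolve_right (inv_ne_zero (pow_ne_zero 2 hs2))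
    have hc : G p 0 2 = 0 := by
      linear_combination (-(Real.cos (p 1))) * Ez01 - Real.sin (p 1) * El01
        - G p 0 2 * Real.sin_sq_add_cos_sq (p 1)
    have he : G p 1 2 = 0 := by
      linear_combination (-(Real.cos (p 1))/2) * Ez11 - (Real.sin (p 1)/2) * El11
        - G p 1 2 * Real.sin_sq_add_cos_sq (p 1)
    have hd2 : G p 1 1 * (Real.sin (p 2) ^ 2)⁻¹ - G p 2 2 = 0 := by
      linear_combination Real.cos (p 1) * Ez12 + Real.sin (p 1) * El12
        - (G p 1 1 * (Real.sin (p 2) ^ 2)⁻¹ - G p 2 2) * Real.sin_sq_add_cos_sq (p 1)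
    have hd : G p 1 1 = G p 2 2 * Real.sin (p 2) ^ 2 := by
      have h := sub_eq_zero.mp hd2
      have hs2' : Real.sin (p 2) ^ 2 ≠ 0 := pow_ne_zero 2 hs2
      calc G p 1 1 = G p 1 1 * (Real.sin (p 2) ^ 2)⁻¹ * Real.sin (p 2) ^ 2 := by
            rw [mul_assoc, inv_mul_cancel₀ hs2', mul_one]
        _ = G p 2 2 * Real.sin (p 2) ^ 2 := by rw [h]
    have hDa : pd (fun q => G q 0 0) 2 p = 0 := by
      rcases Ez00 with h | hs1
      · exact h
      rcases El00 with h | hc1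
      · exact h
      nlinarith [Real.sin_sq_add_cos_sq (p 1)]
    have hDf : pd (fun q => G q 2 2) 2 p = 0 := by
      linear_combination (-(Real.sin (p 1))) * Ez22 + Real.cos (p 1) * El22
        - pd (fun q => G q 2 2) 2 p * Real.sin_sq_add_cos_sq (p 1)
    exact ⟨hb, hc, he, hd, hDa, hDf⟩
  refine ⟨fun r => G ![r, Real.pi, Real.pi/2] 0 0,
          fun r => G ![r, Real.pi, Real.pi/2] 2 2, ?_⟩
  intro p hp
  have hbase : (![p 0, Real.pi, Real.pi/2] : Fin 3 → ℝ) ∈ sphDom := by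
    have hπ := Real.pi_pos
    refine ⟨?_, ⟨?_, ?_⟩, ⟨?_, ?_⟩⟩ <;> simp <;> [exact hp.1; linarith; linarith; linarith; linarith]
  obtain ⟨hb, hc, he, hd, _, _⟩ := key p hp
  have h00 : G p 0 0 = G ![p 0, Real.pi, Real.pi/2] 0 0 :=
    const_on_slice (fun q => G q 0 0) (hdiff 0 0) (fun q hq => hdphi q hq 0 0)
      (fun q hq => (key q hq).2.2.2.2.1) p _ hp hbase (by simp)
  have h22 : G p 2 2 = G ![p 0, Real.pi, Real.pi/2] 2 2 :=
    const_on_slice (fun q => G q 2 2) (hdiff 2 2) (fun q hq => hdphi q hq 2 2)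
      (fun q hq => (key q hq).2.2.2.2.2) p _ hp hbase (by simp)
  exact ⟨h00, h22, by rw [hd, h22], hb, hc, he⟩
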